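/- arXiv:1811.05307 — 2 statements merged into one kernel-verified Lean document; each statement's English description precedes it below -/
import Mathlib

section
/- For every subset A of the natural numbers, the real number r = Σ_{i=0}^∞ 3^{-i} χ_A(i) encodes A exactly: for each n ∈ ℕ, n ∈ A if and only if 3^n · r − 3 · ⌊3^{n-1} · r⌋ ≥ 1, equivalently the n-th digit of r in base 3 (of the fractional expansion obtained by repeatedly multiplying by 3 and taking floors) equals 1. -/
open Classical in
theorem digit_extraction (A : Set ℕ)
    (r : ℝ) (hr : r = ∑' i : ℕ, (if i ∈ A then (1:ℝ) else 0) / 3 ^ i) :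
    ∀ n : ℕ, n ∈ A ↔ 1 ≤ 3 ^ n * r - 3 * ⌊3 ^ n * r / 3⌋ := by
  set f : ℕ → ℝ := fun i => (if i ∈ A then (1:ℝ) else 0) / 3 ^ i with hf
  have hf0 : ∀ i, 0 ≤ f i := fun i => by simp only [hf]; positivity
  have hfle : ∀ i, f i ≤ (1/3:ℝ)^i := by
    intro i
    simp only [hf]
    split
    · simp [one_div, inv_pow]
    · rw [zero_div]; positivity
  have hg : Summable (fun i : ℕ => (1/3:ℝ)^i) :=
    summable_geometric_of_lt_one (by norm_num) (by norm_num)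
  have hsum : Summable f := Summable.of_nonneg_of_le hf0 hfle hg
  intro n
  set T : ℝ := ∑' k : ℕ, f (k + (n+1)) with hT
  have hsplit : ∑ i ∈ Finset.range (n+1), f i + T = r := by
    rw [hr]; exact Summable.sum_add_tsum_nat_add (n+1) hsum
  have hT0 : 0 ≤ T := tsum_nonneg (fun k => hf0 _)
  have hgs : Summable (fun k : ℕ => (1/3:ℝ)^(k + (n+1))) := by
    simpa [pow_add] using hg.mul_right ((1/3:ℝ)^(n+1))
  have hTle : T ≤ (1/3:ℝ)^(n+1) * (3/2) := by
    have h1 : T ≤ ∑' k : ℕ, (1/3:ℝ)^(k + (n+1)) :=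
      Summable.tsum_le_tsum (fun k => hfle _) (hsum.comp_injective (add_left_injective _)) hgs
    have h2 : ∑' k : ℕ, (1/3:ℝ)^(k + (n+1)) = (1/3:ℝ)^(n+1) * (3/2) := by
      simp only [pow_add]
      rw [tsum_mul_right, tsum_geometric_of_lt_one (by norm_num) (by norm_num)]
      ring_nf
    linarith [h1, h2.le]
  have h3pos : (0:ℝ) < 3^n := by positivity
  have ht : 3^n * T ≤ 1/2 := by
    have hle := mul_le_mul_of_nonneg_left hTle h3pos.le
    have heq : (3:ℝ)^n * ((1/3)^(n+1) * (3/2)) = 1/2 := by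
      rw [one_div, inv_pow, pow_succ]
      field_simp
    linarith
  have ht0 : 0 ≤ 3^n * T := by positivity
  set N : ℤ := ∑ i ∈ Finset.range n, (if i ∈ A then 3^(n-1-i) else 0) with hN
  have hhead : (3:ℝ)^n * ∑ i ∈ Finset.range (n+1), f i
      = 3*(N:ℝ) + (if n ∈ A then (1:ℝ) else 0) := by
    rw [Finset.sum_range_succ, mul_add]
    congr 1
    · rw [Finset.mul_sum, hN]
      push_cast
      rw [Finset.mul_sum]
      apply Finset.sum_congr rfl
      intro i hi
      have hi' : i < n := Finset.mem_range.mp hi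
      simp only [hf]
      split
      · rw [show n = (n-1-i)+1+i by omega, pow_add, pow_add]
        have : (3:ℝ)^i ≠ 0 := by positivity
        rw [show (n-1-i)+1+i-1-i = n-1-i by omega]
        field_simp
      · simp
    · simp only [hf]
      split
      · field_simp
      · simp
  have key : (3:ℝ)^n * r = 3*(N:ℝ) + (if n ∈ A then (1:ℝ) else 0) + 3^n * T := by
    rw [← hsplit, mul_add, hhead]
  have hfloor : ⌊(3:ℝ)^n * r / 3⌋ = N := by
    rw [Int.floor_eq_iff, key]
    constructor
    · split_ifs <;> nlinarith
    · split_ifs <;> nlinarith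
  constructor
  · intro hn
    rw [hfloor, key]
    simp only [hn, if_pos]
    linarith
  · intro h
    by_contra hn
    rw [hfloor, key] at h
    simp only [hn, if_neg, not_false_iff] at h
    linarith
end

section
/- Schoenfield's limit lemma (computability version): a function f : ℕ → ℕ is computable relative to the halting problem 0′ if and only if there exists a (total) computable function F : ℕ × ℕ → ℕ such that for every x, f(x) = lim_{s→∞} F(s,x), i.e., F(s,x) = f(x) for all sufficiently large s. -/
/-- Partial recursiveness relative to an oracle `O : ℕ → ℕ`: the usual
schemata of `Nat.Partrec` together with access to the oracle. -/
inductive RecursiveIn' (O : ℕ → ℕ) : (ℕ →. ℕ) → Prop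
  | oracle : RecursiveIn' O O
  | zero : RecursiveIn' O (pure 0)
  | succ : RecursiveIn' O Nat.succ
  | left : RecursiveIn' O ↑fun n : ℕ => n.unpair.1
  | right : RecursiveIn' O ↑fun n : ℕ => n.unpair.2
  | pair {f g} : RecursiveIn' O f → RecursiveIn' O g →
      RecursiveIn' O fun n => Nat.pair <$> f n <*> g n
  | comp {f g} : RecursiveIn' O f → RecursiveIn' O g →
      RecursiveIn' O fun n => g n >>= f
  | prec {f g} : RecursiveIn' O f → RecursiveIn' O g →
      RecursiveIn' O (Nat.unpaired fun a n =>
        n.rec (f a) fun y IH => do let i ← IH; g (Nat.pair a (Nat.pair y i)))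
  | rfind {f} : RecursiveIn' O f →
      RecursiveIn' O fun a => Nat.rfind fun n => (fun m => m = 0) <$> f (Nat.pair a n)

/-- The halting problem `0′`: the set of `n` such that the `n`-th partial
recursive function halts on input `n`. -/
def HaltingProblem : Set ℕ :=
  {n : ℕ | ((Denumerable.ofNat Nat.Partrec.Code n).eval n).Dom}

open Classical in
/-- The characteristic function of the halting problem. -/
noncomputable def chiK : ℕ → ℕ := fun n => if n ∈ HaltingProblem then 1 else 0

namespace ShoenfieldAux

open Nat.Partrec (Code)
open Nat.Partrec.Code

/-- Stage-`s` approximation to the characteristic function of `K`. -/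
def kApprox (s n : ℕ) : ℕ :=
  cond (evaln s (Denumerable.ofNat Code n) n).isSome 1 0

theorem kApprox_primrec : Primrec₂ kApprox := by
  have h1 : Primrec fun p : ℕ × ℕ => evaln p.1 (Denumerable.ofNat Code p.2) p.2 :=
    primrec_evaln.comp <| (Primrec.fst.pair ((Primrec.ofNat Code).comp Primrec.snd)).pair Primrec.snd
  exact (Primrec.cond (Primrec.option_isSome.comp h1) (Primrec.const 1) (Primrec.const 0)).to₂

theorem kApprox_lim (n : ℕ) : ∃ N, ∀ s ≥ N, kApprox s n = chiK n := by
  by_cases h : n ∈ HaltingProblem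
  · obtain ⟨y, hy⟩ := Part.dom_iff_mem.1 h
    obtain ⟨k, hk⟩ := evaln_complete.1 hy
    refine ⟨k, fun s hs => ?_⟩
    have hso : (evaln s (Denumerable.ofNat Code n) n).isSome :=
      Option.isSome_iff_exists.2 ⟨y, evaln_mono hs hk⟩
    simp only [kApprox, hso, cond_true, chiK]
    rw [if_pos h]
  · refine ⟨0, fun s _ => ?_⟩
    have hso : (evaln s (Denumerable.ofNat Code n) n).isSome = false := by
      rw [Bool.eq_false_iff]
      intro hsome
      obtain ⟨y, hy⟩ := Option.isSome_iff_exists.1 hsome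
      exact h (Part.dom_iff_mem.2 ⟨y, evaln_sound hy⟩)
    simp only [kApprox, hso, cond_false, chiK]
    rw [if_neg h]

/-- The key approximation lemma: every function partial recursive in `chiK`
has a primitive recursive sequence of approximations correct in the limit
on its domain. -/
theorem approx {g : ℕ →. ℕ} (hg : RecursiveIn' chiK g) :
    ∃ G : ℕ → ℕ → Option ℕ, Primrec₂ G ∧
      ∀ x a, a ∈ g x → ∃ N, ∀ s ≥ N, G s x = some a := by
  induction hg with
  | oracle =>
      refine ⟨fun s n => some (kApprox s n), Primrec.option_some.comp kApprox_primrec, ?_⟩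
      intro x a ha
      have hax : a = chiK x := by simpa using ha
      obtain ⟨N, hN⟩ := kApprox_lim x
      exact ⟨N, fun s hs => by show some (kApprox s x) = some a; rw [hN s hs, hax]⟩
  | zero =>
      refine ⟨fun _ _ => some 0, (Primrec.const _).to₂, ?_⟩
      intro x a ha
      have : a = 0 := (Part.mem_some_iff (α := ℕ)).1 ha
      exact ⟨0, fun s _ => by show some 0 = some a; rw [this]⟩
  | succ =>
      refine ⟨fun _ x => some (x + 1), (Primrec.option_some.comp (Primrec.succ.comp Primrec.snd)).to₂, ?_⟩
      intro x a ha
      have : a = x + 1 := by simpa using ha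
      exact ⟨0, fun s _ => by show some (x + 1) = some a; rw [this]⟩
  | left =>
      refine ⟨fun _ x => some x.unpair.1,
        (Primrec.option_some.comp (Primrec.fst.comp (Primrec.unpair.comp Primrec.snd))).to₂, ?_⟩
      intro x a ha
      have : a = x.unpair.1 := by simpa using ha
      exact ⟨0, fun s _ => by show some x.unpair.1 = some a; rw [this]⟩
  | right =>
      refine ⟨fun _ x => some x.unpair.2,
        (Primrec.option_some.comp (Primrec.snd.comp (Primrec.unpair.comp Primrec.snd))).to₂, ?_⟩
      intro x a ha
      have : a = x.unpair.2 := by simpa using ha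
      exact ⟨0, fun s _ => by show some x.unpair.2 = some a; rw [this]⟩
  | pair hf hg ihf ihg =>
      obtain ⟨G₁, pG₁, h₁⟩ := ihf
      obtain ⟨G₂, pG₂, h₂⟩ := ihg
      refine ⟨fun s x => (G₁ s x).bind fun a => (G₂ s x).map (Nat.pair a), ?_, ?_⟩
      · have u1 : Primrec fun p : ℕ × ℕ => G₁ p.1 p.2 := pG₁.comp Primrec.fst Primrec.snd
        have u2 : Primrec fun p : ℕ × ℕ => G₂ p.1 p.2 := pG₂.comp Primrec.fst Primrec.snd
        have inner : Primrec₂ fun (p : ℕ × ℕ) (a : ℕ) => (G₂ p.1 p.2).map (Nat.pair a) :=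
          (Primrec.option_map (u2.comp Primrec.fst)
            ((Primrec₂.natPair.comp (Primrec.snd.comp Primrec.fst) Primrec.snd).to₂ :
              Primrec₂ fun (q : (ℕ × ℕ) × ℕ) (b : ℕ) => Nat.pair q.2 b)).to₂
        exact (Primrec.option_bind u1 inner).to₂
      · intro x a ha
        obtain ⟨pf, hpf, hc⟩ := Part.mem_bind_iff.1 ha
        obtain ⟨b, hb, rfl⟩ := (Part.mem_map_iff _).1 hpf
        obtain ⟨c, hcc, rfl⟩ := (Part.mem_map_iff _).1 hc
        obtain ⟨N₁, hN₁⟩ := h₁ x b hb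
        obtain ⟨N₂, hN₂⟩ := h₂ x c hcc
        refine ⟨max N₁ N₂, fun s hs => ?_⟩
        show ((G₁ s x).bind fun a => (G₂ s x).map (Nat.pair a)) = some (Nat.pair b c)
        rw [hN₁ s (le_trans (le_max_left _ _) hs), hN₂ s (le_trans (le_max_right _ _) hs)]
        rfl
  | comp hf hg ihf ihg =>
      obtain ⟨G₁, pG₁, h₁⟩ := ihf
      obtain ⟨G₂, pG₂, h₂⟩ := ihg
      refine ⟨fun s x => (G₂ s x).bind (G₁ s), ?_, ?_⟩
      · have u2 : Primrec fun p : ℕ × ℕ => G₂ p.1 p.2 := pG₂.comp Primrec.fst Primrec.snd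
        exact (Primrec.option_bind u2
          ((pG₁.comp (Primrec.fst.comp Primrec.fst) Primrec.snd).to₂)).to₂
      · intro x a ha
        obtain ⟨y, hy, hay⟩ := Part.mem_bind_iff.1 ha
        obtain ⟨N₂, hN₂⟩ := h₂ x y hy
        obtain ⟨N₁, hN₁⟩ := h₁ y a hay
        refine ⟨max N₁ N₂, fun s hs => ?_⟩
        show ((G₂ s x).bind (G₁ s)) = some a
        rw [hN₂ s (le_trans (le_max_right _ _) hs)]
        exact hN₁ s (le_trans (le_max_left _ _) hs)
  | @prec pf pg hf hg ihf ihg =>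
      obtain ⟨G₁, pG₁, h₁⟩ := ihf
      obtain ⟨G₂, pG₂, h₂⟩ := ihg
      refine ⟨fun s m => (m.unpair.2).rec (G₁ s m.unpair.1)
        (fun y IH => IH.bind fun i => G₂ s (Nat.pair m.unpair.1 (Nat.pair y i))), ?_, ?_⟩
      · have hhf : Primrec fun p : ℕ × ℕ => p.2.unpair.2 :=
          Primrec.snd.comp (Primrec.unpair.comp Primrec.snd)
        have hhg : Primrec fun p : ℕ × ℕ => G₁ p.1 p.2.unpair.1 :=
          pG₁.comp Primrec.fst (Primrec.fst.comp (Primrec.unpair.comp Primrec.snd))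
        have inner : Primrec₂ fun (r : (ℕ × ℕ) × ℕ × Option ℕ) (i : ℕ) =>
            G₂ r.1.1 (Nat.pair r.1.2.unpair.1 (Nat.pair r.2.1 i)) :=
          (pG₂.comp (Primrec.fst.comp (Primrec.fst.comp Primrec.fst))
            (Primrec₂.natPair.comp
              (Primrec.fst.comp (Primrec.unpair.comp (Primrec.snd.comp (Primrec.fst.comp Primrec.fst))))
              (Primrec₂.natPair.comp (Primrec.fst.comp (Primrec.snd.comp Primrec.fst)) Primrec.snd))).to₂
        have hhh : Primrec₂ fun (p : ℕ × ℕ) (q : ℕ × Option ℕ) =>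
            q.2.bind fun i => G₂ p.1 (Nat.pair p.2.unpair.1 (Nat.pair q.1 i)) :=
          (Primrec.option_bind (Primrec.snd.comp Primrec.snd) inner).to₂
        exact (Primrec.nat_rec' hhf hhg hhh).to₂
      · intro m v hv
        have key : ∀ (a n : ℕ) (v : ℕ),
            v ∈ (Nat.rec (motive := fun _ => Part ℕ)
              (pf a) (fun y IH => do let i ← IH; pg (Nat.pair a (Nat.pair y i))) n) →
            ∃ N, ∀ s ≥ N,
              (n.rec (G₁ s a) (fun y IH => IH.bind fun i => G₂ s (Nat.pair a (Nat.pair y i)))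
                : Option ℕ) = some v := by
          intro a n
          induction n with
          | zero => intro v hv; exact h₁ a v hv
          | succ k ih =>
              intro v hv
              obtain ⟨i, hi, hvi⟩ := Part.mem_bind_iff.1 hv
              obtain ⟨N₀, hN₀⟩ := ih i hi
              obtain ⟨N₁, hN₁⟩ := h₂ (Nat.pair a (Nat.pair k i)) v hvi
              refine ⟨max N₀ N₁, fun s hs => ?_⟩
              have e1 := hN₀ s (le_trans (le_max_left _ _) hs)
              show ((k.rec (G₁ s a) (fun y IH => IH.bind fun i => G₂ s (Nat.pair a (Nat.pair y i)))
                : Option ℕ).bind fun i => G₂ s (Nat.pair a (Nat.pair k i))) = some v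
              rw [e1, Option.bind_some]
              exact hN₁ s (le_trans (le_max_right _ _) hs)
        exact key m.unpair.1 m.unpair.2 v hv
  | rfind hf ihf =>
      obtain ⟨G₁, pG₁, h₁⟩ := ihf
      refine ⟨fun s a =>
        (fun i => if i ≤ s then some i else none)
          ((List.range (s + 1)).findIdx fun n => decide (G₁ s (Nat.pair a n) = some 0)), ?_, ?_⟩
      · have hfi : Primrec fun p : ℕ × ℕ =>
            (List.range (p.1 + 1)).findIdx fun n => decide (G₁ p.1 (Nat.pair p.2 n) = some 0) := by
          apply Primrec.list_findIdx (Primrec.list_range.comp (Primrec.succ.comp Primrec.fst))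
          exact (Primrec.eq.comp
            (pG₁.comp (Primrec.fst.comp Primrec.fst)
              (Primrec₂.natPair.comp (Primrec.snd.comp Primrec.fst) Primrec.snd))
            (Primrec.const (some 0))).decide.to₂
        refine (Primrec.ite (Primrec.nat_le.comp hfi Primrec.fst)
          (Primrec.option_some.comp hfi) (Primrec.const none)).to₂
      · intro x a ha
        obtain ⟨htrue, hfalse⟩ := Nat.mem_rfind.1 ha
        -- htrue : true ∈ (fun m => m = 0) <$> f (Nat.pair x a)
        obtain ⟨k₀, hk₀, hk₀0⟩ := (Part.mem_map_iff _).1 htrue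
        have hk0 : k₀ = 0 := by simpa using hk₀0
        subst hk0
        -- for each m < a there is k_m ≠ 0 in f (pair x m)
        have hm : ∀ m, ∃ N, m < a → ∀ s ≥ N,
            decide (G₁ s (Nat.pair x m) = some 0) = false := by
          intro m
          by_cases hma : m < a
          · obtain ⟨k, hk, hkne⟩ := (Part.mem_map_iff _).1 (hfalse hma)
            have hkne' : k ≠ 0 := by simpa using hkne
            obtain ⟨N, hN⟩ := h₁ (Nat.pair x m) k hk
            refine ⟨N, fun _ s hs => ?_⟩
            rw [hN s hs]
            simp [hkne']
          · exact ⟨0, fun h => absurd h hma⟩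
        choose Nm hNm using hm
        obtain ⟨Na, hNa⟩ := h₁ (Nat.pair x a) 0 hk₀
        set N := a + Na + (Finset.range a).sum Nm with hNdef
        refine ⟨N, fun s hs => ?_⟩
        have hsa : a ≤ s := le_trans (by omega) hs
        have hsNa : Na ≤ s := le_trans (by omega) hs
        have hsm : ∀ m < a, Nm m ≤ s := by
          intro m hma
          have : Nm m ≤ (Finset.range a).sum Nm :=
            Finset.single_le_sum (fun i _ => Nat.zero_le _) (Finset.mem_range.2 hma)
          omega
        have hidx : ((List.range (s + 1)).findIdx
            fun n => decide (G₁ s (Nat.pair x n) = some 0)) = a := by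
          have hlen : a < (List.range (s + 1)).length := by simpa using Nat.lt_succ_of_le hsa
          rw [List.findIdx_eq hlen]
          constructor
          · simp only [List.getElem_range]
            rw [hNa s hsNa]; simp
          · intro j hj
            simp only [List.getElem_range]
            have hja : j < a := hj
            rw [hNm j hja s (hsm j hja)]
        show (fun i => if i ≤ s then some i else none) ((List.range (s + 1)).findIdx
            fun n => decide (G₁ s (Nat.pair x n) = some 0)) = some a
        rw [hidx]
        exact if_pos hsa

end ShoenfieldAux

namespace ShoenfieldAux

/-- Any (oracle-free) partial recursive function is recursive in any oracle. -/
theorem recursiveIn_of_natPartrec {O : ℕ → ℕ} {g : ℕ →. ℕ} (h : Nat.Partrec g) :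
    RecursiveIn' O g := by
  induction h with
  | zero => exact .zero
  | succ => exact .succ
  | left => exact .left
  | right => exact .right
  | pair _ _ ihf ihg => exact .pair ihf ihg
  | comp _ _ ihf ihg => exact .comp ihf ihg
  | prec _ _ ihf ihg => exact .prec ihf ihg
  | rfind _ ihf => exact .rfind ihf

theorem recursiveIn_of_computable {O : ℕ → ℕ} {g : ℕ → ℕ} (h : Computable g) :
    RecursiveIn' O ↑g :=
  recursiveIn_of_natPartrec (Partrec.nat_iff.1 h)

open Nat.Partrec (Code)
open Nat.Partrec.Code

/-- 0′ decides any Σ⁰₁ set: for a partial recursive `p` there is a computable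
`h` with `chiK (h m)` deciding whether `p m` halts. -/
theorem chiK_decides {p : ℕ →. ℕ} (hp : Nat.Partrec p) :
    ∃ h : ℕ → ℕ, Computable h ∧
      ∀ m, ((p m).Dom → chiK (h m) = 1) ∧ (¬(p m).Dom → chiK (h m) = 0) := by
  have hp' : Nat.Partrec fun k : ℕ => p k.unpair.1 := by
    apply Partrec.nat_iff.1
    exact (Partrec.nat_iff.2 hp).comp
      (Computable.fst.comp (Primrec.unpair.to_comp))
  obtain ⟨c, hc⟩ := exists_code.1 hp'
  refine ⟨fun m => Encodable.encode (c.curry m), ?_, ?_⟩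
  · exact Computable.encode.comp
      ((primrec₂_curry.comp (Primrec.const c) Primrec.id).to_comp)
  · intro m
    have hK : Encodable.encode (c.curry m) ∈ HaltingProblem ↔ (p m).Dom := by
      unfold HaltingProblem
      simp only [Set.mem_setOf_eq, Denumerable.ofNat_encode]
      rw [eval_curry, hc]
      simp
    constructor
    · intro hd
      simp only [chiK]
      rw [if_pos (hK.2 hd)]
    · intro hd
      have hnot : Encodable.encode (c.curry m) ∉ HaltingProblem := fun hh => hd (hK.1 hh)
      simp only [chiK]
      rw [if_neg hnot]

end ShoenfieldAux

open ShoenfieldAux in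
/-- Shoenfield's limit lemma: `f` is computable relative to `0′` iff it is the
pointwise (eventually constant) limit of a total computable function. -/
theorem shoenfield_limit_lemma (f : ℕ → ℕ) :
    RecursiveIn' chiK (fun n => f n) ↔
      ∃ F : ℕ × ℕ → ℕ, Computable F ∧
        ∀ x : ℕ, ∃ N : ℕ, ∀ s ≥ N, F (s, x) = f x := by
  constructor
  · intro hrec
    obtain ⟨G, pG, hG⟩ := approx hrec
    refine ⟨fun p => (G p.1 p.2).getD 0, ?_, ?_⟩
    · exact (Primrec.option_getD.comp (pG.comp Primrec.fst Primrec.snd) (Primrec.const 0)).to_comp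
    · intro x
      have hfx : f x ∈ (fun n => (f n : Part ℕ)) x := ⟨trivial, rfl⟩
      obtain ⟨N, hN⟩ := hG x (f x) hfx
      exact ⟨N, fun s hs => by show (G s x).getD 0 = f x; rw [hN s hs]; rfl⟩
  · rintro ⟨F, hF, hlim⟩
    classical
    -- the Σ⁰₁ predicate: for m = pair x n, "∃ t ≥ n, F (t, x) ≠ F (n, x)"
    set q : ℕ → ℕ → Bool := fun m t =>
      decide (m.unpair.2 ≤ t ∧ F (t, m.unpair.1) ≠ F (m.unpair.2, m.unpair.1)) with hqdef
    have hqc : Computable₂ q := by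
      have h1 : Primrec fun p : ℕ × ℕ => p.1.unpair.2 :=
        Primrec.snd.comp (Primrec.unpair.comp Primrec.fst)
      have h2 : Primrec fun p : ℕ × ℕ => p.1.unpair.1 :=
        Primrec.fst.comp (Primrec.unpair.comp Primrec.fst)
      have c1 : Computable fun p : ℕ × ℕ => decide (p.1.unpair.2 ≤ p.2) :=
        (Primrec.nat_le.comp h1 Primrec.snd).decide.to_comp
      have c2 : Computable fun p : ℕ × ℕ => F (p.2, p.1.unpair.1) :=
        hF.comp (Computable.snd.pair h2.to_comp)
      have c3 : Computable fun p : ℕ × ℕ => F (p.1.unpair.2, p.1.unpair.1) :=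
        hF.comp (h1.to_comp.pair h2.to_comp)
      have ceq : Computable fun p : ℕ × ℕ =>
          decide (F (p.2, p.1.unpair.1) = F (p.1.unpair.2, p.1.unpair.1)) :=
        Primrec.eq.decide.to_comp.comp c2 c3
      have cq : Computable fun p : ℕ × ℕ =>
          cond (decide (p.1.unpair.2 ≤ p.2))
            (cond (decide (F (p.2, p.1.unpair.1) = F (p.1.unpair.2, p.1.unpair.1))) false true)
            false :=
        Computable.cond c1
          (Computable.cond ceq (Computable.const false) (Computable.const true))
          (Computable.const false)
      refine Computable₂.mk (cq.of_eq fun p => ?_)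
      by_cases hle : p.1.unpair.2 ≤ p.2 <;>
        by_cases he : F (p.2, p.1.unpair.1) = F (p.1.unpair.2, p.1.unpair.1) <;>
          simp [hqdef, hle, he]
    set p0 : ℕ →. ℕ := fun m => Nat.rfind fun t => (q m t : Part Bool) with hp0def
    have hp0 : Nat.Partrec p0 := by
      apply Partrec.nat_iff.1
      exact Partrec.rfind hqc.partrec₂
    have hp0dom : ∀ m, (p0 m).Dom ↔ ∃ t, q m t = true := by
      intro m
      rw [hp0def]
      simp only [Nat.rfind_dom]
      constructor
      · rintro ⟨n, hn, -⟩
        exact ⟨n, by simpa using hn⟩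
      · rintro ⟨n, hn⟩
        exact ⟨n, by simpa using hn, fun {m} _ => trivial⟩
    obtain ⟨h, hc, hspec⟩ := chiK_decides hp0
    -- the oracle function m ↦ chiK (h m) is recursive in chiK
    have hOr : RecursiveIn' chiK (↑(fun m => chiK (h m)) : ℕ →. ℕ) := by
      have h0 := RecursiveIn'.comp (f := (↑chiK : ℕ →. ℕ)) (g := (↑h : ℕ →. ℕ))
        RecursiveIn'.oracle (recursiveIn_of_computable hc)
      have he : (fun n => (↑h : ℕ →. ℕ) n >>= (↑chiK : ℕ →. ℕ)) = (↑(fun m => chiK (h m)) : ℕ →. ℕ) := by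
        funext n
        simp [PFun.coe_val]
        exact Part.bind_some _ _
      exact he ▸ h0
    have hR := RecursiveIn'.rfind hOr
    have hid : RecursiveIn' chiK (↑(fun n : ℕ => n) : ℕ →. ℕ) :=
      recursiveIn_of_computable Computable.id
    have hP := RecursiveIn'.pair hid hR
    set T : ℕ → ℕ := fun m => F (m.unpair.2, m.unpair.1) with hTdef
    have hT : Computable T :=
      hF.comp ((Computable.snd.comp Primrec.unpair.to_comp).pair
        (Computable.fst.comp Primrec.unpair.to_comp))
    have hfinal := RecursiveIn'.comp (recursiveIn_of_computable hT) hP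
    -- now show the composed function is extensionally f
    have key : ∀ x : ℕ,
        ((fun n => Nat.pair <$> (↑(fun n : ℕ => n) : ℕ →. ℕ) n <*>
            (fun a => Nat.rfind fun n => (fun m => m = 0) <$>
              (↑(fun m => chiK (h m)) : ℕ →. ℕ) (Nat.pair a n)) n) x >>= (↑T : ℕ →. ℕ))
          = (f x : Part ℕ) := by
      intro x
      obtain ⟨N, hN⟩ := hlim x
      have hex : ∃ n, chiK (h (Nat.pair x n)) = 0 := by
        refine ⟨N, ((hspec (Nat.pair x N)).2) ?_⟩
        rw [hp0dom]
        rintro ⟨t, ht⟩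
        rw [hqdef] at ht
        simp only [Nat.unpair_pair, decide_eq_true_eq] at ht
        exact ht.2 (by rw [hN t ht.1, hN N le_rfl])
      set n₀ := Nat.find hex with hn₀def
      have hspec0 : chiK (h (Nat.pair x n₀)) = 0 := Nat.find_spec hex
      have hmem : n₀ ∈ Nat.rfind fun n => (fun m => m = 0) <$>
          (↑(fun m => chiK (h m)) : ℕ →. ℕ) (Nat.pair x n) := by
        apply Nat.mem_rfind.2
        constructor
        · simp [PFun.coe_val, hspec0]
        · intro m hm
          have := Nat.find_min hex hm
          simp [PFun.coe_val, this]
      have hFn₀ : F (n₀, x) = f x := by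
        have hnd : ¬(p0 (Nat.pair x n₀)).Dom := by
          intro hd
          have := (hspec (Nat.pair x n₀)).1 hd
          omega
        rw [hp0dom] at hnd
        push_neg at hnd
        have hconst : ∀ t, n₀ ≤ t → F (t, x) = F (n₀, x) := by
          intro t ht
          have := hnd t
          rw [hqdef] at this
          simp only [ne_eq, Nat.unpair_pair, decide_eq_true_eq, not_and, not_not] at this
          exact this ht
        have h1 := hconst (max n₀ N) (le_max_left _ _)
        rw [hN (max n₀ N) (le_max_right _ _)] at h1
        exact h1.symm
      apply Part.eq_some_iff.2
      refine Part.mem_bind_iff.2 ⟨Nat.pair x n₀, ?_, ?_⟩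
      · exact Part.mem_bind_iff.2 ⟨Nat.pair x,
          (Part.mem_map_iff _).2 ⟨x, ⟨trivial, rfl⟩, rfl⟩,
          (Part.mem_map_iff _).2 ⟨n₀, hmem, rfl⟩⟩
      · rw [hTdef]
        simp only [PFun.coe_val, Nat.unpair_pair]
        rw [hFn₀]
        simp
    have heq : (fun n => Nat.pair <$> (↑(fun n : ℕ => n) : ℕ →. ℕ) n <*>
            (fun a => Nat.rfind fun n => (fun m => m = 0) <$>
              (↑(fun m => chiK (h m)) : ℕ →. ℕ) (Nat.pair a n)) n >>= (↑T : ℕ →. ℕ))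
          = fun n => (f n : Part ℕ) := funext key
    exact heq ▸ hfinal
end
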